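/- Suppose 𝒴 = {0,1}. Let 𝒫*_{U,Mon} be the set of primitive distributions satisfying IV validity, IV monotonicity, P*(Y(0)=0) = 1, and P*(D(z,1)=1) = 1 for all z ∈ 𝒵. Fix an observed data distribution P with P(Z=z) > 0 for all z, and let z_max ∈ 𝒵 satisfy P(D=1 | Z=z_max) ≥ P(D=1 | Z=z) for all z. If 𝒫*_I(P; 𝒫*_{U,Mon}) is nonempty, then the identified set for the average counterfactual outcome equals the interval corresponding to the most lenient judge: Θ_I(P; 𝒫*_{U,Mon}) = [ P(Y=1, D=1 | Z=z_max), 1 − P(Y=0, D=1 | Z=z_max) ]. -/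

import Mathlib

open Finset
open scoped Classical

namespace IVPol

/-- Sample space of model primitives `(Y(0), Y(1), D(·,·), Z)`:
a point records the two potential outcomes (elements of the finite outcome set `Y ⊆ ℝ`),
the potential treatments `D(z, a) ∈ {0,1}` for every judge `z` and policy `a`,
and the instrument value `Z`. -/
abbrev Prim (Y : Finset ℝ) (K : ℕ) := Y × Y × (Fin K → Bool → Bool) × Fin K

/-- Sample space of the observed data `(Y, D, Z)`. -/
abbrev Obs (Y : Finset ℝ) (K : ℕ) := Y × Bool × Fin K

/-- A probability distribution on a finite type, given by its pmf. -/
structure Dist (α : Type*) [Fintype α] where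
  p : α → ℝ
  nonneg : ∀ a, 0 ≤ p a
  sum_one : ∑ a, p a = 1

/-- Probability of an event. -/
noncomputable def Dist.pr {α : Type*} [Fintype α] (P : Dist α) (A : Set α) : ℝ :=
  ∑ a, if a ∈ A then P.p a else 0

/-- Expectation of a real-valued random variable. -/
noncomputable def Dist.exp {α : Type*} [Fintype α] (P : Dist α) (f : α → ℝ) : ℝ :=
  ∑ a, P.p a * f a

section auxlemmas
variable {α : Type*} [Fintype α]

lemma Dist.pr_congr (P : Dist α) {S T : Set α} (h : ∀ a, P.p a ≠ 0 → (a ∈ S ↔ a ∈ T)) :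
    P.pr S = P.pr T := by
  unfold Dist.pr
  refine Finset.sum_congr rfl fun a _ => ?_
  by_cases hp : P.p a = 0
  · simp [hp]
  · simp [h a hp]

lemma Dist.pr_mono (P : Dist α) {S T : Set α} (h : S ⊆ T) : P.pr S ≤ P.pr T := by
  refine Finset.sum_le_sum fun a _ => ?_
  by_cases hS : a ∈ S
  · simp [hS, h hS]
  · simp only [hS, if_false]
    split
    · exact P.nonneg a
    · exact le_rfl

lemma Dist.pr_nonneg (P : Dist α) (S : Set α) : 0 ≤ P.pr S := by
  refine Finset.sum_nonneg fun a _ => ?_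
  split
  · exact P.nonneg a
  · exact le_rfl

lemma Dist.pr_add_compl (P : Dist α) (S : Set α) : P.pr S + P.pr Sᶜ = 1 := by
  unfold Dist.pr
  rw [← Finset.sum_add_distrib, ← P.sum_one]
  refine Finset.sum_congr rfl fun a _ => ?_
  by_cases hS : a ∈ S <;> simp [hS]

lemma Dist.pr_compl (P : Dist α) (S : Set α) : P.pr Sᶜ = 1 - P.pr S := by
  have := P.pr_add_compl S; linarith

lemma Dist.pr_le_one (P : Dist α) (S : Set α) : P.pr S ≤ 1 := by
  have := P.pr_add_compl S; have := P.pr_nonneg Sᶜ; linarith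

lemma Dist.pr_eq_one_iff (P : Dist α) (S : Set α) :
    P.pr S = 1 ↔ ∀ a, P.p a ≠ 0 → a ∈ S := by
  constructor
  · intro h a hp
    by_contra haS
    have hc : P.pr Sᶜ = 0 := by have := P.pr_add_compl S; linarith
    have := (Finset.sum_eq_zero_iff_of_nonneg (fun a _ => by
      split
      · exact P.nonneg a
      · exact le_rfl)).mp hc a (Finset.mem_univ a)
    simp only [Set.mem_compl_iff, haS, not_false_iff, if_true] at this
    exact hp this
  · intro h
    rw [← P.sum_one]
    refine Finset.sum_congr rfl fun a _ => ?_
    by_cases hp : P.p a = 0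
    · simp [hp]
    · simp [h a hp]

lemma Dist.pr_point (P : Dist α) (c : α) : P.pr {a | a = c} = P.p c := by
  unfold Dist.pr
  rw [Finset.sum_eq_single c] <;> simp +contextual [Set.mem_setOf_eq]

lemma Dist.pr_eq_zero_iff (P : Dist α) (S : Set α) :
    P.pr S = 0 ↔ ∀ a, P.p a ≠ 0 → a ∉ S := by
  constructor
  · intro h a hp haS
    have := (Finset.sum_eq_zero_iff_of_nonneg (fun a _ => by
      split
      · exact P.nonneg a
      · exact le_rfl)).mp h a (Finset.mem_univ a)
    simp only [haS, if_true] at this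
    exact hp this
  · intro h
    refine Finset.sum_eq_zero fun a _ => ?_
    by_cases hp : P.p a = 0
    · simp [hp]
    · simp [h a hp]

lemma Dist.pr_inter_add (P : Dist α) (A B : Set α) :
    P.pr A = P.pr (A ∩ B) + P.pr (A ∩ Bᶜ) := by
  unfold Dist.pr
  rw [← Finset.sum_add_distrib]
  refine Finset.sum_congr rfl fun a _ => ?_
  by_cases hA : a ∈ A <;> by_cases hB : a ∈ B <;> simp [hA, hB]

/-- Pushforward distribution. -/
noncomputable def Dist.push (P : Dist α) (f : α → α) : Dist α where
  p a := ∑ b, if f b = a then P.p b else 0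
  nonneg a := Finset.sum_nonneg fun b _ => by
    split
    · exact P.nonneg b
    · exact le_rfl
  sum_one := by
    rw [Finset.sum_comm]
    rw [← P.sum_one]
    refine Finset.sum_congr rfl fun b _ => ?_
    simp

lemma Dist.push_pr (P : Dist α) (f : α → α) (S : Set α) :
    (P.push f).pr S = P.pr (f ⁻¹' S) := by
  unfold Dist.pr Dist.push
  simp only
  have h1 : ∀ a : α, (if a ∈ S then ∑ b, if f b = a then P.p b else 0 else 0)
      = ∑ b, if a ∈ S ∧ f b = a then P.p b else 0 := by
    intro a; by_cases hS : a ∈ S <;> simp [hS]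
  rw [Finset.sum_congr rfl fun a _ => h1 a, Finset.sum_comm]
  refine Finset.sum_congr rfl fun b _ => ?_
  rw [Finset.sum_eq_single (f b)] <;> simp +contextual [Set.mem_preimage, eq_comm]

/-- Mixture distribution. -/
noncomputable def Dist.mix (P Q : Dist α) (l : ℝ) (h0 : 0 ≤ l) (h1 : l ≤ 1) : Dist α where
  p a := l * P.p a + (1 - l) * Q.p a
  nonneg a := add_nonneg (mul_nonneg h0 (P.nonneg a)) (mul_nonneg (by linarith) (Q.nonneg a))
  sum_one := by
    rw [Finset.sum_add_distrib, ← Finset.mul_sum, ← Finset.mul_sum, P.sum_one, Q.sum_one]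
    ring

lemma Dist.mix_pr (P Q : Dist α) (l : ℝ) (h0 : 0 ≤ l) (h1 : l ≤ 1) (S : Set α) :
    (P.mix Q l h0 h1).pr S = l * P.pr S + (1 - l) * Q.pr S := by
  unfold Dist.pr Dist.mix
  rw [Finset.mul_sum, Finset.mul_sum, ← Finset.sum_add_distrib]
  refine Finset.sum_congr rfl fun a _ => ?_
  by_cases hS : a ∈ S <;> simp [hS]

lemma Dist.mix_exp (P Q : Dist α) (l : ℝ) (h0 : 0 ≤ l) (h1 : l ≤ 1) (f : α → ℝ) :
    (P.mix Q l h0 h1).exp f = l * P.exp f + (1 - l) * Q.exp f := by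
  unfold Dist.exp Dist.mix
  rw [Finset.mul_sum, Finset.mul_sum, ← Finset.sum_add_distrib]
  refine Finset.sum_congr rfl fun a _ => ?_
  ring


end auxlemmas

variable {Y : Finset ℝ} {K : ℕ}

/-- Potential treatment `D(z, a)`. -/
def pd (ω : Prim Y K) (z : Fin K) (a : Bool) : Bool := ω.2.2.1 z a

/-- The instrument `Z`. -/
def pz (ω : Prim Y K) : Fin K := ω.2.2.2

/-- Observed treatment `D = D(Z, 0)`. -/
def obsD (ω : Prim Y K) : Bool := pd ω (pz ω) false

/-- Observed outcome `Y = Y(D(Z, 0))`. -/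
def obsY (ω : Prim Y K) : Y := if obsD ω then ω.2.1 else ω.1

/-- Counterfactual outcome `Y(D(Z, 1))`. -/
noncomputable def cfY (ω : Prim Y K) : ℝ :=
  if pd ω (pz ω) true then (ω.2.1 : ℝ) else (ω.1 : ℝ)

/-- IV validity: `(Y(0), Y(1), D(·,·))` is independent of `Z`. -/
def IVvalid (Ps : Dist (Prim Y K)) : Prop :=
  ∀ (a b : Y) (g : Fin K → Bool → Bool) (z : Fin K),
    Ps.pr {ω | ω.1 = a ∧ ω.2.1 = b ∧ ω.2.2.1 = g ∧ ω.2.2.2 = z}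
      = Ps.pr {ω | ω.1 = a ∧ ω.2.1 = b ∧ ω.2.2.1 = g} * Ps.pr {ω | ω.2.2.2 = z}

/-- `Ps` generates the observed data distribution `P`:
the law of `(Y(D(Z,0)), D(Z,0), Z)` under `Ps` is `P`. -/
def generates (Ps : Dist (Prim Y K)) (P : Dist (Obs Y K)) : Prop :=
  ∀ (y : Y) (d : Bool) (z : Fin K),
    P.p (y, d, z) = Ps.pr {ω | obsY ω = y ∧ obsD ω = d ∧ pz ω = z}

/-- Marginal pmf of judge `z`:
`π_z(y0, y1, d0, d1) = P*(Y(0)=y0, Y(1)=y1, D(z,0)=d0, D(z,1)=d1)`. -/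
noncomputable def marginal (Ps : Dist (Prim Y K)) (z : Fin K) (y0 y1 : Y) (d0 d1 : Bool) : ℝ :=
  Ps.pr {ω | ω.1 = y0 ∧ ω.2.1 = y1 ∧ pd ω z false = d0 ∧ pd ω z true = d1}

/-- Probability of `Z = z` under the observed distribution. -/
noncomputable def prZ (P : Dist (Obs Y K)) (z : Fin K) : ℝ := P.pr {o | o.2.2 = z}

/-- Conditional probability `P(Y = y, D = d | Z = z)` of the observed data. -/
noncomputable def obsCond (P : Dist (Obs Y K)) (y : Y) (d : Bool) (z : Fin K) : ℝ :=
  P.p (y, d, z) / prZ P z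

/-- Average counterfactual outcome `θ = E[Y(D(Z,1))]`. -/
noncomputable def theta (Ps : Dist (Prim Y K)) : ℝ := Ps.exp cfY

/-- The identified set for the average counterfactual outcome. -/
def ThetaI (P : Dist (Obs Y K)) (fam : Set (Dist (Prim Y K))) : Set ℝ :=
  {t | ∃ Ps ∈ fam, generates Ps P ∧ theta Ps = t}

/-- IV monotonicity: for every pair of judges, one is almost surely more lenient. -/
def ivMono (Ps : Dist (Prim Y K)) : Prop :=
  ∀ z z' : Fin K,
    Ps.pr {ω | pd ω z' false ≤ pd ω z false} = 1 ∨
    Ps.pr {ω | pd ω z false ≤ pd ω z' false} = 1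

/-- The binary outcome set `𝒴 = {0, 1}`. -/
noncomputable abbrev Y01 : Finset ℝ := {0, 1}

/-- The family `𝒫*_{U,Mon}`: IV validity, IV monotonicity, known outcome
`Y(0) = 0`, and universal release `D(z,1) = 1` for all judges `z`. -/
def famUMon (K : ℕ) : Set (Dist (Prim Y01 K)) :=
  {Ps | IVvalid Ps ∧ ivMono Ps ∧ Ps.pr {ω | (ω.1 : ℝ) = 0} = 1 ∧
        ∀ z : Fin K, Ps.pr {ω | pd ω z true = true} = 1}


section domain
variable {K : ℕ}

/-- The element `0` of `Y01`. -/
noncomputable def e0 : Y01 := ⟨0, by simp⟩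
/-- The element `1` of `Y01`. -/
noncomputable def e1 : Y01 := ⟨1, by simp⟩

lemma Y01.coe_cases (y : Y01) : (y : ℝ) = 0 ∨ (y : ℝ) = 1 := by
  have h : (y : ℝ) ∈ ({0, 1} : Finset ℝ) := y.2
  rw [Finset.mem_insert, Finset.mem_singleton] at h
  exact h

lemma Y01.eq_e1_iff (y : Y01) : y = e1 ↔ (y : ℝ) = 1 := by
  constructor
  · rintro rfl; rfl
  · intro h; exact Subtype.ext h

lemma Y01.eq_e0_iff (y : Y01) : y = e0 ↔ (y : ℝ) = 0 := by
  constructor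
  · rintro rfl; rfl
  · intro h; exact Subtype.ext h

lemma pr_point_prim (Ps : Dist (Prim Y01 K)) (a b : Y01) (g : Fin K → Bool → Bool) (z : Fin K) :
    Ps.pr {ω | ω.1 = a ∧ ω.2.1 = b ∧ ω.2.2.1 = g ∧ ω.2.2.2 = z} = Ps.p (a, b, g, z) := by
  rw [← Ps.pr_point (a, b, g, z)]
  apply Dist.pr_congr
  intro ω _
  simp [Set.mem_setOf_eq, Prod.ext_iff]

lemma pr_margZ (Ps : Dist (Prim Y01 K)) (Q : Y01 → Y01 → (Fin K → Bool → Bool) → Prop)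
    (z : Fin K) :
    Ps.pr {ω | Q ω.1 ω.2.1 ω.2.2.1 ∧ ω.2.2.2 = z}
      = ∑ a : Y01, ∑ b : Y01, ∑ g : Fin K → Bool → Bool,
          if Q a b g then Ps.p (a, b, g, z) else 0 := by
  unfold Dist.pr
  rw [Fintype.sum_prod_type]
  refine Finset.sum_congr rfl fun a _ => ?_
  rw [Fintype.sum_prod_type]
  refine Finset.sum_congr rfl fun b _ => ?_
  rw [Fintype.sum_prod_type]
  refine Finset.sum_congr rfl fun g _ => ?_
  by_cases h : Q a b g <;> simp [h, Set.mem_setOf_eq]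

lemma pr_marg (Ps : Dist (Prim Y01 K)) (Q : Y01 → Y01 → (Fin K → Bool → Bool) → Prop) :
    Ps.pr {ω | Q ω.1 ω.2.1 ω.2.2.1}
      = ∑ a : Y01, ∑ b : Y01, ∑ g : Fin K → Bool → Bool,
          if Q a b g then (∑ z : Fin K, Ps.p (a, b, g, z)) else 0 := by
  unfold Dist.pr
  rw [Fintype.sum_prod_type]
  refine Finset.sum_congr rfl fun a _ => ?_
  rw [Fintype.sum_prod_type]
  refine Finset.sum_congr rfl fun b _ => ?_
  rw [Fintype.sum_prod_type]
  refine Finset.sum_congr rfl fun g _ => ?_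
  by_cases h : Q a b g <;> simp [h, Set.mem_setOf_eq]

lemma pr_triple_prim (Ps : Dist (Prim Y01 K)) (a b : Y01) (g : Fin K → Bool → Bool) :
    Ps.pr {ω | ω.1 = a ∧ ω.2.1 = b ∧ ω.2.2.1 = g} = ∑ z : Fin K, Ps.p (a, b, g, z) := by
  have := pr_marg Ps (fun a' b' g' => a' = a ∧ b' = b ∧ g' = g)
  rw [this]
  rw [Finset.sum_eq_single_of_mem a (Finset.mem_univ a)
    (fun a' _ ha => Finset.sum_eq_zero fun b' _ => Finset.sum_eq_zero fun g' _ => by simp [ha])]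
  rw [Finset.sum_eq_single_of_mem b (Finset.mem_univ b)
    (fun b' _ hb => Finset.sum_eq_zero fun g' _ => by simp [hb])]
  rw [Finset.sum_eq_single_of_mem g (Finset.mem_univ g) (fun g' _ hg => by simp [hg])]
  simp

/-- Key consequence of IV validity: any event on `(Y(0), Y(1), D)` factors with `{Z = z}`. -/
lemma valid_marg {Ps : Dist (Prim Y01 K)} (hv : IVvalid Ps)
    (Q : Y01 → Y01 → (Fin K → Bool → Bool) → Prop) (z : Fin K) :
    Ps.pr {ω | Q ω.1 ω.2.1 ω.2.2.1 ∧ ω.2.2.2 = z}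
      = Ps.pr {ω | Q ω.1 ω.2.1 ω.2.2.1} * Ps.pr {ω | ω.2.2.2 = z} := by
  rw [pr_margZ, pr_marg]
  rw [Finset.sum_mul]
  refine Finset.sum_congr rfl fun a _ => ?_
  rw [Finset.sum_mul]
  refine Finset.sum_congr rfl fun b _ => ?_
  rw [Finset.sum_mul]
  refine Finset.sum_congr rfl fun g _ => ?_
  by_cases h : Q a b g
  · simp only [h, if_true]
    rw [← pr_point_prim, hv a b g z, pr_triple_prim]
  · simp [h]

end domain


section gen
variable {K : ℕ}

lemma pr_partition {α β : Type*} [Fintype α] [Fintype β] (P : Dist α) (f : α → β) (C : Set α) :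
    ∑ b : β, P.pr {a | f a = b ∧ a ∈ C} = P.pr C := by
  unfold Dist.pr
  rw [Finset.sum_comm]
  refine Finset.sum_congr rfl fun a _ => ?_
  by_cases hC : a ∈ C <;> simp [Set.mem_setOf_eq, hC, ite_and, Finset.sum_ite_eq]

lemma pr_set_eq {α : Type*} [Fintype α] (P : Dist α) {S T : Set α}
    (h : ∀ a, a ∈ S ↔ a ∈ T) : P.pr S = P.pr T := P.pr_congr fun a _ => h a

lemma obs_pr_point (P : Dist (Obs Y01 K)) (y : Y01) (d : Bool) (z : Fin K) :
    P.pr {o | o.1 = y ∧ o.2.1 = d ∧ o.2.2 = z} = P.p (y, d, z) := by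
  rw [← P.pr_point (y, d, z)]
  apply pr_set_eq
  intro o
  simp [Set.mem_setOf_eq, Prod.ext_iff]

/-- The Z-marginal of a generating primitive distribution. -/
lemma gen_prZ {P : Dist (Obs Y01 K)} {Ps : Dist (Prim Y01 K)} (hgen : generates Ps P)
    (z : Fin K) : Ps.pr {ω | ω.2.2.2 = z} = prZ P z := by
  have h1 : prZ P z = ∑ y : Y01, ∑ d : Bool, P.p (y, d, z) :=
    calc prZ P z
        = ∑ y : Y01, P.pr {o | o.1 = y ∧ o.2.2 = z} :=
          (pr_partition P (fun o => o.1) {o | o.2.2 = z}).symm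
      _ = ∑ y : Y01, ∑ d : Bool, P.p (y, d, z) := by
          refine Finset.sum_congr rfl fun y _ => ?_
          calc P.pr {o | o.1 = y ∧ o.2.2 = z}
              = ∑ d : Bool, P.pr {o | o.2.1 = d ∧ (o.1 = y ∧ o.2.2 = z)} :=
                (pr_partition P (fun o => o.2.1) {o | o.1 = y ∧ o.2.2 = z}).symm
            _ = ∑ d : Bool, P.p (y, d, z) := by
                refine Finset.sum_congr rfl fun d _ => ?_
                rw [← obs_pr_point P y d z]
                apply pr_set_eq
                intro o
                simp only [Set.mem_setOf_eq]
                tauto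
  rw [h1]
  symm
  calc ∑ y : Y01, ∑ d : Bool, P.p (y, d, z)
      = ∑ y : Y01, ∑ d : Bool, Ps.pr {ω | obsY ω = y ∧ (obsD ω = d ∧ ω.2.2.2 = z)} := by
        refine Finset.sum_congr rfl fun y _ => Finset.sum_congr rfl fun d _ => ?_
        rw [hgen y d z]
        rfl
    _ = ∑ y : Y01, Ps.pr {ω | obsY ω = y ∧ ω.2.2.2 = z} := by
        refine Finset.sum_congr rfl fun y _ => ?_
        calc ∑ d : Bool, Ps.pr {ω | obsY ω = y ∧ (obsD ω = d ∧ ω.2.2.2 = z)}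
            = ∑ d : Bool, Ps.pr {ω | obsD ω = d ∧ (obsY ω = y ∧ ω.2.2.2 = z)} := by
              refine Finset.sum_congr rfl fun d _ => ?_
              exact pr_set_eq Ps fun ω => by simp only [Set.mem_setOf_eq]; tauto
          _ = Ps.pr {ω | obsY ω = y ∧ ω.2.2.2 = z} :=
              pr_partition Ps (fun ω => obsD ω) {ω | obsY ω = y ∧ ω.2.2.2 = z}
    _ = Ps.pr {ω | ω.2.2.2 = z} :=
        pr_partition Ps (fun ω => obsY ω) {ω | ω.2.2.2 = z}

/-- `P(Y=y, D=1, Z=z) = P*(Y(1)=y, D(z,0)=1) ⬝ P(Z=z)`. -/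
lemma gen_cond {P : Dist (Obs Y01 K)} {Ps : Dist (Prim Y01 K)} (hgen : generates Ps P)
    (hv : IVvalid Ps) (y : Y01) (z : Fin K) :
    P.p (y, true, z) = Ps.pr {ω | ω.2.1 = y ∧ ω.2.2.1 z false = true} * prZ P z := by
  rw [hgen y true z]
  have hset : Ps.pr {ω | obsY ω = y ∧ obsD ω = true ∧ pz ω = z}
      = Ps.pr {ω | (ω.2.1 = y ∧ ω.2.2.1 z false = true) ∧ ω.2.2.2 = z} := by
    apply pr_set_eq
    intro ω
    simp only [Set.mem_setOf_eq, obsY, obsD, pd, pz]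
    constructor
    · rintro ⟨h1, h2, h3⟩
      subst h3
      simp only [h2, if_true] at h1
      exact ⟨⟨h1, h2⟩, rfl⟩
    · rintro ⟨⟨h1, h2⟩, h3⟩
      subst h3
      refine ⟨?_, h2, rfl⟩
      simp only [h2, if_true]
      exact h1
  rw [hset, valid_marg hv (fun _ b g => b = y ∧ g z false = true) z, gen_prZ hgen]

/-- `P(D=1, Z=z) = P*(D(z,0)=1) ⬝ P(Z=z)`. -/
lemma gen_condD {P : Dist (Obs Y01 K)} {Ps : Dist (Prim Y01 K)} (hgen : generates Ps P)
    (hv : IVvalid Ps) (z : Fin K) :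
    P.pr {o | o.2.1 = true ∧ o.2.2 = z}
      = Ps.pr {ω | ω.2.2.1 z false = true} * prZ P z := by
  have h1 : P.pr {o | o.2.1 = true ∧ o.2.2 = z} = ∑ y : Y01, P.p (y, true, z) :=
    calc P.pr {o | o.2.1 = true ∧ o.2.2 = z}
        = ∑ y : Y01, P.pr {o | o.1 = y ∧ (o.2.1 = true ∧ o.2.2 = z)} :=
          (pr_partition P (fun o => o.1) {o | o.2.1 = true ∧ o.2.2 = z}).symm
      _ = ∑ y : Y01, P.p (y, true, z) := by
          refine Finset.sum_congr rfl fun y _ => ?_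
          rw [← obs_pr_point P y true z]
  rw [h1]
  calc ∑ y : Y01, P.p (y, true, z)
      = ∑ y : Y01, Ps.pr {ω | ω.2.1 = y ∧ ω.2.2.1 z false = true} * prZ P z :=
        Finset.sum_congr rfl fun y _ => gen_cond hgen hv y z
    _ = (∑ y : Y01, Ps.pr {ω | ω.2.1 = y ∧ ω.2.2.1 z false = true}) * prZ P z := by
        rw [Finset.sum_mul]
    _ = Ps.pr {ω | ω.2.2.1 z false = true} * prZ P z := by
        congr 1
        exact pr_partition Ps (fun ω => ω.2.1) {ω | ω.2.2.1 z false = true}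

end gen


section fam
variable {K : ℕ}

lemma fam_support {Ps : Dist (Prim Y01 K)} (hf : Ps ∈ famUMon K) :
    ∀ ω : Prim Y01 K, Ps.p ω ≠ 0 → (ω.1 : ℝ) = 0 ∧ ∀ z : Fin K, ω.2.2.1 z true = true := by
  obtain ⟨hv, hm, h0, h1⟩ := hf
  intro ω hp
  exact ⟨(Ps.pr_eq_one_iff _).mp h0 ω hp, fun z => (Ps.pr_eq_one_iff _).mp (h1 z) ω hp⟩

lemma theta_eq {Ps : Dist (Prim Y01 K)} (hf : Ps ∈ famUMon K) :
    theta Ps = Ps.pr {ω | (ω.2.1 : ℝ) = 1} := by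
  unfold theta Dist.exp Dist.pr
  refine Finset.sum_congr rfl fun ω _ => ?_
  by_cases hp : Ps.p ω = 0
  · simp [hp]
  · obtain ⟨h0, h1⟩ := fam_support hf ω hp
    have hcf : cfY ω = (ω.2.1 : ℝ) := by
      unfold cfY pd
      rw [if_pos (h1 (pz ω))]
    rw [hcf]
    rcases Y01.coe_cases ω.2.1 with h | h
    · simp [Set.mem_setOf_eq, h]
    · simp [Set.mem_setOf_eq, h]

variable {P : Dist (Obs Y01 K)}

/-- The lower bound as a primitive probability. -/
lemma gen_lb {Ps : Dist (Prim Y01 K)} (hv : IVvalid Ps) (hgen : generates Ps P)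
    (hPz : ∀ z : Fin K, 0 < prZ P z) (zmax : Fin K) :
    P.pr {o | (o.1 : ℝ) = 1 ∧ o.2.1 = true ∧ o.2.2 = zmax} / prZ P zmax
      = Ps.pr {ω | (ω.2.1 : ℝ) = 1 ∧ ω.2.2.1 zmax false = true} := by
  have h1 : P.pr {o | (o.1 : ℝ) = 1 ∧ o.2.1 = true ∧ o.2.2 = zmax} = P.p (e1, true, zmax) := by
    rw [← obs_pr_point P e1 true zmax]
    exact pr_set_eq P fun o => by
      simp only [Set.mem_setOf_eq, Y01.eq_e1_iff]
  rw [h1, gen_cond hgen hv e1 zmax]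
  rw [mul_div_assoc, div_self (ne_of_gt (hPz zmax)), mul_one]
  exact pr_set_eq Ps fun ω => by simp only [Set.mem_setOf_eq, Y01.eq_e1_iff]

lemma gen_ub {Ps : Dist (Prim Y01 K)} (hv : IVvalid Ps) (hgen : generates Ps P)
    (hPz : ∀ z : Fin K, 0 < prZ P z) (zmax : Fin K) :
    P.pr {o | (o.1 : ℝ) = 0 ∧ o.2.1 = true ∧ o.2.2 = zmax} / prZ P zmax
      = Ps.pr {ω | (ω.2.1 : ℝ) = 0 ∧ ω.2.2.1 zmax false = true} := by
  have h1 : P.pr {o | (o.1 : ℝ) = 0 ∧ o.2.1 = true ∧ o.2.2 = zmax} = P.p (e0, true, zmax) := by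
    rw [← obs_pr_point P e0 true zmax]
    exact pr_set_eq P fun o => by
      simp only [Set.mem_setOf_eq, Y01.eq_e0_iff]
  rw [h1, gen_cond hgen hv e0 zmax]
  rw [mul_div_assoc, div_self (ne_of_gt (hPz zmax)), mul_one]
  exact pr_set_eq Ps fun ω => by simp only [Set.mem_setOf_eq, Y01.eq_e0_iff]

/-- Subset direction: the average counterfactual outcome lies in the interval. -/
lemma theta_bounds {Ps : Dist (Prim Y01 K)} (hf : Ps ∈ famUMon K) (hgen : generates Ps P)
    (hPz : ∀ z : Fin K, 0 < prZ P z) (zmax : Fin K) :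
    theta Ps ∈ Set.Icc
        (P.pr {o | (o.1 : ℝ) = 1 ∧ o.2.1 = true ∧ o.2.2 = zmax} / prZ P zmax)
        (1 - P.pr {o | (o.1 : ℝ) = 0 ∧ o.2.1 = true ∧ o.2.2 = zmax} / prZ P zmax) := by
  have hv := hf.1
  rw [theta_eq hf, Set.mem_Icc, gen_lb hv hgen hPz zmax, gen_ub hv hgen hPz zmax]
  constructor
  · exact Ps.pr_mono fun ω hω => hω.1
  · have h2 : Ps.pr {ω | (ω.2.1 : ℝ) = 1}
        ≤ Ps.pr {ω | (ω.2.1 : ℝ) = 0 ∧ ω.2.2.1 zmax false = true}ᶜ := by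
      refine Ps.pr_mono fun ω hω => ?_
      intro hc
      have hx1 : (ω.2.1 : ℝ) = 1 := hω
      have hx0 : (ω.2.1 : ℝ) = 0 := hc.1
      rw [hx1] at hx0
      norm_num at hx0
    rw [Ps.pr_compl] at h2
    linarith

/-- Pointwise monotonicity at the most lenient judge. -/
lemma fam_mono_max {Ps : Dist (Prim Y01 K)} (hf : Ps ∈ famUMon K) (hgen : generates Ps P)
    (hPz : ∀ z : Fin K, 0 < prZ P z) (zmax : Fin K)
    (hzmax : ∀ z : Fin K,
      P.pr {o | o.2.1 = true ∧ o.2.2 = z} / prZ P z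
        ≤ P.pr {o | o.2.1 = true ∧ o.2.2 = zmax} / prZ P zmax)
    (z : Fin K) (ω : Prim Y01 K) (hp : Ps.p ω ≠ 0) :
    ω.2.2.1 z false ≤ ω.2.2.1 zmax false := by
  obtain ⟨hv, hm, -, -⟩ := hf
  rcases hm zmax z with h | h
  · exact (Ps.pr_eq_one_iff _).mp h ω hp
  · -- reverse direction a.s.: then probabilities coincide
    set A : Set (Prim Y01 K) := {ω | ω.2.2.1 z false = true} with hA
    set B : Set (Prim Y01 K) := {ω | ω.2.2.1 zmax false = true} with hB
    have hBsubA : Ps.pr B = Ps.pr (A ∩ B) := by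
      apply Ps.pr_congr
      intro ω' hp'
      have hle : pd ω' zmax false ≤ pd ω' z false := (Ps.pr_eq_one_iff _).mp h ω' hp'
      constructor
      · intro hBm
        refine ⟨?_, hBm⟩
        have : ω'.2.2.1 zmax false = true := hBm
        unfold pd at hle
        rw [this] at hle
        exact le_antisymm (by cases hq : ω'.2.2.1 z false <;> simp [hq]) hle
      · exact fun hm' => hm'.2
    have hprA : Ps.pr A = P.pr {o | o.2.1 = true ∧ o.2.2 = z} / prZ P z := by
      rw [gen_condD hgen hv z, mul_div_assoc, div_self (ne_of_gt (hPz z)), mul_one]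
    have hprB : Ps.pr B = P.pr {o | o.2.1 = true ∧ o.2.2 = zmax} / prZ P zmax := by
      rw [gen_condD hgen hv zmax, mul_div_assoc, div_self (ne_of_gt (hPz zmax)), mul_one]
    have hAB : Ps.pr A ≤ Ps.pr B := by rw [hprA, hprB]; exact hzmax z
    have hsplit := Ps.pr_inter_add A B
    have hABc : Ps.pr (A ∩ Bᶜ) = 0 := by
      have h1 : Ps.pr (A ∩ B) ≤ Ps.pr B := Ps.pr_mono fun x hx => hx.2
      have h2 : 0 ≤ Ps.pr (A ∩ Bᶜ) := Ps.pr_nonneg _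
      -- Ps.pr (A ∩ B) = Ps.pr B from hBsubA
      nlinarith [hBsubA, hsplit, hAB]
    have hnot := (Ps.pr_eq_zero_iff _).mp hABc ω hp
    by_cases hz : ω.2.2.1 z false = true
    · by_cases hzm : ω.2.2.1 zmax false = true
      · rw [hz, hzm]
      · exact absurd ⟨hz, fun hc => hzm hc⟩ hnot
    · rw [Bool.not_eq_true] at hz
      rw [hz]
      exact Bool.false_le _

end fam


section construct
variable {K : ℕ}

lemma coe_e0 : ((e0 : Y01) : ℝ) = 0 := rfl
lemma coe_e1 : ((e1 : Y01) : ℝ) = 1 := rfl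

/-- Modify `Y(1)` to the constant `b` on the event `D(zmax, 0) = 0`. -/
noncomputable def fmod (zmax : Fin K) (b : Y01) (ω : Prim Y01 K) : Prim Y01 K :=
  if ω.2.2.1 zmax false = false then (ω.1, b, ω.2.2.1, ω.2.2.2) else ω

lemma fmod_fst (zmax : Fin K) (b : Y01) (ω : Prim Y01 K) : (fmod zmax b ω).1 = ω.1 := by
  unfold fmod; split <;> rfl

lemma fmod_g (zmax : Fin K) (b : Y01) (ω : Prim Y01 K) :
    (fmod zmax b ω).2.2.1 = ω.2.2.1 := by
  unfold fmod; split <;> rfl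

lemma fmod_z (zmax : Fin K) (b : Y01) (ω : Prim Y01 K) :
    (fmod zmax b ω).2.2.2 = ω.2.2.2 := by
  unfold fmod; split <;> rfl

lemma fmod_snd (zmax : Fin K) (b : Y01) (ω : Prim Y01 K) :
    (fmod zmax b ω).2.1 = if ω.2.2.1 zmax false = false then b else ω.2.1 := by
  unfold fmod; split <;> rename_i h <;> simp [h]

lemma fmod_eq_self (zmax : Fin K) (b : Y01) (ω : Prim Y01 K)
    (h : ω.2.2.1 zmax false = true) : fmod zmax b ω = ω := by
  unfold fmod
  rw [if_neg (by simp [h])]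

lemma push_mem_fam {Ps : Dist (Prim Y01 K)} (hf : Ps ∈ famUMon K) (zmax : Fin K) (b : Y01) :
    Ps.push (fmod zmax b) ∈ famUMon K := by
  obtain ⟨hv, hm, h0, h1⟩ := hf
  refine ⟨?_, ?_, ?_, ?_⟩
  · intro a b' g z
    rw [Dist.push_pr, Dist.push_pr, Dist.push_pr]
    have eZ : Ps.pr (fmod zmax b ⁻¹' {ω | ω.2.2.2 = z}) = Ps.pr {ω | ω.2.2.2 = z} :=
      pr_set_eq Ps fun ω => by
        simp [Set.mem_preimage, Set.mem_setOf_eq, fmod_z]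
    have eQ : Ps.pr (fmod zmax b ⁻¹'
          {ω | ω.1 = a ∧ ω.2.1 = b' ∧ ω.2.2.1 = g ∧ ω.2.2.2 = z})
        = Ps.pr {ω | (ω.1 = a ∧ (if ω.2.2.1 zmax false = false then b else ω.2.1) = b'
            ∧ ω.2.2.1 = g) ∧ ω.2.2.2 = z} :=
      pr_set_eq Ps fun ω => by
        simp only [Set.mem_preimage, Set.mem_setOf_eq, fmod_fst, fmod_snd, fmod_g, fmod_z]
        tauto
    have eT : Ps.pr (fmod zmax b ⁻¹' {ω | ω.1 = a ∧ ω.2.1 = b' ∧ ω.2.2.1 = g})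
        = Ps.pr {ω | ω.1 = a ∧ (if ω.2.2.1 zmax false = false then b else ω.2.1) = b'
            ∧ ω.2.2.1 = g} :=
      pr_set_eq Ps fun ω => by
        simp only [Set.mem_preimage, Set.mem_setOf_eq, fmod_fst, fmod_snd, fmod_g]
    rw [eQ, eZ, eT,
      valid_marg hv (fun a' b'' g' => a' = a
        ∧ (if g' zmax false = false then b else b'') = b' ∧ g' = g) z]
  · intro z z'
    have e : ∀ (z1 z2 : Fin K),
        (Ps.push (fmod zmax b)).pr {ω | pd ω z1 false ≤ pd ω z2 false}
          = Ps.pr {ω | pd ω z1 false ≤ pd ω z2 false} := by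
      intro z1 z2
      rw [Dist.push_pr]
      exact pr_set_eq Ps fun ω => by
        simp [Set.mem_preimage, Set.mem_setOf_eq, pd, fmod_g]
    rcases hm z z' with h | h
    · left; rw [e]; exact h
    · right; rw [e]; exact h
  · rw [Dist.push_pr]
    have e : Ps.pr (fmod zmax b ⁻¹' {ω | (ω.1 : ℝ) = 0}) = Ps.pr {ω | (ω.1 : ℝ) = 0} :=
      pr_set_eq Ps fun ω => by simp [Set.mem_preimage, Set.mem_setOf_eq, fmod_fst]
    rw [e]
    exact h0
  · intro z
    rw [Dist.push_pr]
    have e : Ps.pr (fmod zmax b ⁻¹' {ω | pd ω z true = true}) = Ps.pr {ω | pd ω z true = true} :=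
      pr_set_eq Ps fun ω => by simp [Set.mem_preimage, Set.mem_setOf_eq, pd, fmod_g]
    rw [e]
    exact h1 z

variable {P : Dist (Obs Y01 K)}

lemma push_generates {Ps : Dist (Prim Y01 K)} (hf : Ps ∈ famUMon K) (hgen : generates Ps P)
    (hPz : ∀ z : Fin K, 0 < prZ P z) (zmax : Fin K)
    (hzmax : ∀ z : Fin K,
      P.pr {o | o.2.1 = true ∧ o.2.2 = z} / prZ P z
        ≤ P.pr {o | o.2.1 = true ∧ o.2.2 = zmax} / prZ P zmax)
    (b : Y01) : generates (Ps.push (fmod zmax b)) P := by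
  intro y d z
  rw [hgen y d z, Dist.push_pr]
  apply Ps.pr_congr
  intro ω hp
  by_cases hD : ω.2.2.1 zmax false = true
  · rw [Set.mem_preimage, fmod_eq_self zmax b ω hD]
  · rw [Bool.not_eq_true] at hD
    have hmono := fam_mono_max hf hgen hPz zmax hzmax (pz ω) ω hp
    have hobsD : obsD ω = false := by
      unfold obsD
      rw [hD] at hmono
      exact le_antisymm hmono (Bool.false_le _)
    have hobsD' : obsD (fmod zmax b ω) = false := by
      unfold obsD pd pz
      rw [fmod_g, fmod_z]
      exact hobsD
    have hobsY : obsY ω = ω.1 := by unfold obsY; rw [hobsD]; rfl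
    have hobsY' : obsY (fmod zmax b ω) = ω.1 := by
      unfold obsY
      rw [hobsD', if_neg (by simp), fmod_fst]
    have hz' : pz (fmod zmax b ω) = pz ω := fmod_z zmax b ω
    simp only [Set.mem_preimage, Set.mem_setOf_eq, hobsY, hobsY', hobsD, hobsD', hz']

lemma push_theta_low {Ps : Dist (Prim Y01 K)} (hf : Ps ∈ famUMon K) (zmax : Fin K) :
    theta (Ps.push (fmod zmax e0))
      = Ps.pr {ω | (ω.2.1 : ℝ) = 1 ∧ ω.2.2.1 zmax false = true} := by
  rw [theta_eq (push_mem_fam hf zmax e0), Dist.push_pr]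
  apply pr_set_eq Ps
  intro ω
  simp only [Set.mem_preimage, Set.mem_setOf_eq, fmod_snd]
  by_cases hD : ω.2.2.1 zmax false = true
  · simp [hD]
  · rw [Bool.not_eq_true] at hD
    simp [hD, coe_e0]

lemma push_theta_high {Ps : Dist (Prim Y01 K)} (hf : Ps ∈ famUMon K) (zmax : Fin K) :
    theta (Ps.push (fmod zmax e1))
      = 1 - Ps.pr {ω | (ω.2.1 : ℝ) = 0 ∧ ω.2.2.1 zmax false = true} := by
  rw [theta_eq (push_mem_fam hf zmax e1), Dist.push_pr]
  rw [← Ps.pr_compl {ω | (ω.2.1 : ℝ) = 0 ∧ ω.2.2.1 zmax false = true}]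
  apply pr_set_eq Ps
  intro ω
  simp only [Set.mem_preimage, Set.mem_setOf_eq, Set.mem_compl_iff, fmod_snd]
  by_cases hD : ω.2.2.1 zmax false = true
  · simp only [hD, if_neg (by simp : ¬(true = false))]
    rcases Y01.coe_cases ω.2.1 with h | h
    · simp [h]
    · simp [h]
  · rw [Bool.not_eq_true] at hD
    simp [hD, coe_e1]

end construct


section mixsec
variable {K : ℕ}

lemma mix_fam {Ps : Dist (Prim Y01 K)} (hf : Ps ∈ famUMon K) (zmax : Fin K)
    (lam : ℝ) (hl0 : 0 ≤ lam) (hl1 : lam ≤ 1) :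
    ((Ps.push (fmod zmax e0)).mix (Ps.push (fmod zmax e1)) lam hl0 hl1) ∈ famUMon K := by
  have hfL := push_mem_fam hf zmax e0
  have hfH := push_mem_fam hf zmax e1
  have hZ : ∀ z : Fin K, (Ps.push (fmod zmax e0)).pr {ω | ω.2.2.2 = z}
      = (Ps.push (fmod zmax e1)).pr {ω | ω.2.2.2 = z} := by
    intro z
    rw [Dist.push_pr, Dist.push_pr]
    have eL : Ps.pr (fmod zmax e0 ⁻¹' {ω | ω.2.2.2 = z}) = Ps.pr {ω | ω.2.2.2 = z} :=
      pr_set_eq Ps fun ω => by simp [Set.mem_preimage, Set.mem_setOf_eq, fmod_z]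
    have eH : Ps.pr (fmod zmax e1 ⁻¹' {ω | ω.2.2.2 = z}) = Ps.pr {ω | ω.2.2.2 = z} :=
      pr_set_eq Ps fun ω => by simp [Set.mem_preimage, Set.mem_setOf_eq, fmod_z]
    rw [eL, eH]
  refine ⟨?_, ?_, ?_, ?_⟩
  · intro a b g z
    rw [Dist.mix_pr, Dist.mix_pr, Dist.mix_pr, hfL.1 a b g z, hfH.1 a b g z, hZ z]
    ring
  · intro z z'
    have e : ∀ (b : Y01) (z1 z2 : Fin K),
        (Ps.push (fmod zmax b)).pr {ω | pd ω z1 false ≤ pd ω z2 false}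
          = Ps.pr {ω | pd ω z1 false ≤ pd ω z2 false} := fun b z1 z2 => by
      rw [Dist.push_pr]
      exact pr_set_eq Ps fun ω => by
        simp [Set.mem_preimage, Set.mem_setOf_eq, pd, fmod_g]
    rcases hf.2.1 z z' with h | h
    · left
      rw [Dist.mix_pr, e, e, h]
      ring
    · right
      rw [Dist.mix_pr, e, e, h]
      ring
  · rw [Dist.mix_pr, hfL.2.2.1, hfH.2.2.1]
    ring
  · intro z
    rw [Dist.mix_pr, hfL.2.2.2 z, hfH.2.2.2 z]
    ring

lemma mix_generates {P : Dist (Obs Y01 K)} {Q R : Dist (Prim Y01 K)}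
    (hQ : generates Q P) (hR : generates R P)
    (lam : ℝ) (hl0 : 0 ≤ lam) (hl1 : lam ≤ 1) :
    generates (Q.mix R lam hl0 hl1) P := by
  intro y d z
  rw [Dist.mix_pr, ← hQ y d z, ← hR y d z]
  ring

end mixsec

/-- under universal release with `Y(0) = 0` and IV monotonicity,
the identified set for the average counterfactual outcome is the judge-specific
interval of the most lenient judge. -/
theorem statement11 {K : ℕ}
    (P : Dist (Obs Y01 K)) (hPz : ∀ z : Fin K, 0 < prZ P z)
    (zmax : Fin K)
    (hzmax : ∀ z : Fin K,
      P.pr {o | o.2.1 = true ∧ o.2.2 = z} / prZ P z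
        ≤ P.pr {o | o.2.1 = true ∧ o.2.2 = zmax} / prZ P zmax)
    (hne : ∃ Ps ∈ famUMon K, generates Ps P) :
    ThetaI P (famUMon K)
      = Set.Icc
          (P.pr {o | (o.1 : ℝ) = 1 ∧ o.2.1 = true ∧ o.2.2 = zmax} / prZ P zmax)
          (1 - P.pr {o | (o.1 : ℝ) = 0 ∧ o.2.1 = true ∧ o.2.2 = zmax} / prZ P zmax)
    := by
  obtain ⟨Ps0, hf0, hgen0⟩ := hne
  ext t
  simp only [ThetaI, Set.mem_setOf_eq]
  constructor
  · rintro ⟨Ps, hf, hgen, rfl⟩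
    exact theta_bounds hf hgen hPz zmax
  · intro ht
    rw [Set.mem_Icc] at ht
    obtain ⟨htl, htu⟩ := ht
    set l := P.pr {o | (o.1 : ℝ) = 1 ∧ o.2.1 = true ∧ o.2.2 = zmax} / prZ P zmax with hldef
    set u := 1 - P.pr {o | (o.1 : ℝ) = 0 ∧ o.2.1 = true ∧ o.2.2 = zmax} / prZ P zmax with hudef
    have hθL : theta (Ps0.push (fmod zmax e0)) = l := by
      rw [push_theta_low hf0 zmax, hldef, gen_lb hf0.1 hgen0 hPz zmax]
    have hθH : theta (Ps0.push (fmod zmax e1)) = u := by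
      rw [push_theta_high hf0 zmax, hudef, gen_ub hf0.1 hgen0 hPz zmax]
    have hlu : l ≤ u := le_trans htl htu
    by_cases hcase : l = u
    · refine ⟨Ps0.push (fmod zmax e0), push_mem_fam hf0 zmax e0,
        push_generates hf0 hgen0 hPz zmax hzmax e0, ?_⟩
      rw [hθL]
      exact le_antisymm htl (hcase ▸ htu)
    · have hlt : l < u := lt_of_le_of_ne hlu hcase
      have hpos : 0 < u - l := by linarith
      set lam := (u - t) / (u - l) with hlam
      have hl0 : 0 ≤ lam := div_nonneg (by linarith) (le_of_lt hpos)
      have hl1 : lam ≤ 1 := by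
        rw [hlam, div_le_one hpos]
        linarith
      refine ⟨(Ps0.push (fmod zmax e0)).mix (Ps0.push (fmod zmax e1)) lam hl0 hl1,
        mix_fam hf0 zmax lam hl0 hl1,
        mix_generates (push_generates hf0 hgen0 hPz zmax hzmax e0)
          (push_generates hf0 hgen0 hPz zmax hzmax e1) lam hl0 hl1, ?_⟩
      have hthe : theta ((Ps0.push (fmod zmax e0)).mix (Ps0.push (fmod zmax e1)) lam hl0 hl1)
          = lam * theta (Ps0.push (fmod zmax e0))
            + (1 - lam) * theta (Ps0.push (fmod zmax e1)) :=
        Dist.mix_exp _ _ lam hl0 hl1 cfY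
      rw [hthe, hθL, hθH, hlam]
      field_simp
      ring

end IVPol
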